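/- Pairing a state with an effect of unipartite oblate stabilizer theory yields a probability: for every ρ ∈ conv(Ω) and every e ∈ conv({0, I} ∪ {R ω R† : ω ∈ Ω}) (convex hulls in the real vector space of 2×2 Hermitian matrices), the real number Re(tr(ρ e)) lies in the interval [0, 1]. In particular, the maximum of tr(ρ e) over extreme points ρ ∈ Ω, e ∈ {RωR† : ω ∈ Ω} equals ½(1 + r² cos(π/4)) = 1. -/

import Mathlib

open Matrix Kronecker Complex

noncomputable section

/-- The Pauli matrices indexed by ℤ₄. -/
def pauli : ZMod 4 → Matrix (Fin 2) (Fin 2) ℂ := fun μ =>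
  if μ = 0 then 1
  else if μ = 1 then !![0, 1; 1, 0]
  else if μ = 2 then !![0, -Complex.I; Complex.I, 0]
  else !![1, 0; 0, -1]

/-- The rotation R = diag(e^{-iπ/8}, e^{iπ/8}). -/
def R : Matrix (Fin 2) (Fin 2) ℂ :=
  !![Complex.exp (-(Real.pi / 8 : ℝ) * Complex.I), 0;
     0, Complex.exp ((Real.pi / 8 : ℝ) * Complex.I)]

/-- The Bell vector |Φ⁺⟩ = (|00⟩+|11⟩)/√2. -/
def bell : Fin 2 × Fin 2 → ℂ := fun p =>
  if p.1 = p.2 then ((Real.sqrt 2 : ℝ) : ℂ)⁻¹ else 0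

/-- The Bell projector P_Φ = |Φ⁺⟩⟨Φ⁺|. -/
def PΦ : Matrix (Fin 2 × Fin 2) (Fin 2 × Fin 2) ℂ :=
  Matrix.of fun p q => bell p * (starRingEnd ℂ) (bell q)

/-- Φ⁺_{μ,m} = ((σ_μ R^m)† ⊗ I) P_Φ ((σ_μ R^m) ⊗ I). -/
def PhiProj (μ : ZMod 4) (m : ZMod 8) : Matrix (Fin 2 × Fin 2) (Fin 2 × Fin 2) ℂ :=
  ((pauli μ * R ^ m.val)ᴴ ⊗ₖ (1 : Matrix (Fin 2) (Fin 2) ℂ)) * PΦ *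
    ((pauli μ * R ^ m.val) ⊗ₖ (1 : Matrix (Fin 2) (Fin 2) ℂ))

/-- r = 2^{1/4}. -/
def r : ℝ := (2 : ℝ) ^ ((1 : ℝ) / 4)

/-- The stretched stabilizer states Ω. -/
def Ω : Set (Matrix (Fin 2) (Fin 2) ℂ) :=
  { (1 / 2 : ℂ) • (1 + (r : ℂ) • pauli 1),
    (1 / 2 : ℂ) • (1 - (r : ℂ) • pauli 1),
    (1 / 2 : ℂ) • (1 + (r : ℂ) • pauli 2),
    (1 / 2 : ℂ) • (1 - (r : ℂ) • pauli 2),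
    (1 / 2 : ℂ) • (1 + pauli 3),
    (1 / 2 : ℂ) • (1 - pauli 3) }

/-- The set Φ of entangled states/effects. -/
def PhiSet : Set (Matrix (Fin 2 × Fin 2) (Fin 2 × Fin 2) ℂ) :=
  { Q | ∃ μ : ZMod 4, ∃ m : ZMod 8, m ∈ ({1, 3, 5, 7} : Set (ZMod 8)) ∧ Q = PhiProj μ m }

/-- Place a 4×4 matrix `Q` on tensor factors (2,3) of (ℂ²)⊗⁴ (identity on factors 1 and 4). -/
def mid (Q : Matrix (Fin 2 × Fin 2) (Fin 2 × Fin 2) ℂ) :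
    Matrix ((Fin 2 × Fin 2) × (Fin 2 × Fin 2)) ((Fin 2 × Fin 2) × (Fin 2 × Fin 2)) ℂ :=
  Matrix.of fun p q =>
    (1 : Matrix (Fin 2) (Fin 2) ℂ) p.1.1 q.1.1 *
      Q (p.1.2, p.2.1) (q.1.2, q.2.1) *
      (1 : Matrix (Fin 2) (Fin 2) ℂ) p.2.2 q.2.2

/-- Partial trace over the first tensor factor of ℂ² ⊗ ℂ². -/
def ptr1 (M : Matrix (Fin 2 × Fin 2) (Fin 2 × Fin 2) ℂ) : Matrix (Fin 2) (Fin 2) ℂ :=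
  Matrix.of fun i j => ∑ a : Fin 2, M (a, i) (a, j)

/-- Partial trace over the second tensor factor of ℂ² ⊗ ℂ². -/
def ptr2 (M : Matrix (Fin 2 × Fin 2) (Fin 2 × Fin 2) ℂ) : Matrix (Fin 2) (Fin 2) ℂ :=
  Matrix.of fun i j => ∑ a : Fin 2, M (i, a) (j, a)

/-- Partial trace over the second and third tensor factors of (ℂ²)⊗⁴. -/
def ptr23
    (M : Matrix ((Fin 2 × Fin 2) × (Fin 2 × Fin 2)) ((Fin 2 × Fin 2) × (Fin 2 × Fin 2)) ℂ) :
    Matrix (Fin 2 × Fin 2) (Fin 2 × Fin 2) ℂ :=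
  Matrix.of fun p q => ∑ b : Fin 2, ∑ c : Fin 2, M ((p.1, b), (c, p.2)) ((q.1, b), (c, q.2))

end


noncomputable section StmtFiveAux

namespace StmtFiveAux

open Matrix Complex

/-- Bloch-parametrized 2x2 matrix. -/
def Mt (x y z : ℝ) : Matrix (Fin 2) (Fin 2) ℂ :=
  !![((1+z)/2 : ℝ), ((x:ℂ) - (y:ℂ)*Complex.I)/2; ((x:ℂ) + (y:ℂ)*Complex.I)/2, ((1-z)/2 : ℝ)]

lemma key (a b c d e f g h : ℂ) :
  Matrix.trace (!![a,b;c,d] * (R * !![e,f;g,h] * Rᴴ)) =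
  a*e + d*h + (b*g + c*f) * (Real.cos (Real.pi/4) : ℂ)
    + (b*g - c*f) * (Real.sin (Real.pi/4) : ℂ) * Complex.I := by
  have hcs : (Real.sin (Real.pi/8):ℂ)^2 + (Real.cos (Real.pi/8):ℂ)^2 = 1 := by
    have h := Real.sin_sq_add_cos_sq (Real.pi/8)
    exact_mod_cast congrArg (Complex.ofReal) h
  have hc : (Real.cos (Real.pi/4) : ℂ) = (Real.cos (Real.pi/8):ℂ)^2 - (Real.sin (Real.pi/8):ℂ)^2 := by
    have h2 : Real.pi/4 = 2 * (Real.pi/8) := by ring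
    rw [h2, Real.cos_two_mul']; push_cast; ring
  have hs : (Real.sin (Real.pi/4) : ℂ) = 2 * (Real.sin (Real.pi/8):ℂ) * (Real.cos (Real.pi/8):ℂ) := by
    have h2 : Real.pi/4 = 2 * (Real.pi/8) := by ring
    rw [h2, Real.sin_two_mul]; push_cast; ring
  simp only [R, Matrix.trace_fin_two, Matrix.mul_apply, Fin.sum_univ_two,
    Matrix.conjTranspose_apply, Matrix.of_apply, Matrix.cons_val', Matrix.cons_val_zero,
    Matrix.cons_val_one, Matrix.head_cons, Matrix.head_fin_const, Matrix.empty_val',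
    Matrix.cons_val_fin_one, Complex.exp_mul_I, star_def, Complex.cos_neg, Complex.sin_neg,
    ← Complex.ofReal_cos, ← Complex.ofReal_sin, Complex.ofReal_neg, Real.cos_neg, Real.sin_neg,
    hc, hs, _root_.map_add, _root_.map_mul, map_neg, Complex.conj_ofReal, Complex.conj_I,
    map_zero, Complex.I_sq, mul_zero, zero_mul]
  linear_combination (a*e + d*h) * hcs + ((Real.sin (Real.pi/8):ℂ)^2 * (b*g + c*f - a*e - d*h)) * Complex.I_sq

lemma key2 (x y z x' y' z' : ℝ) :
    Matrix.trace (Mt x y z * (R * Mt x' y' z' * Rᴴ)) =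
    ((((1+z)*(1+z') + (1-z)*(1-z'))/4 + (x*x'+y*y')/2 * Real.cos (Real.pi/4)
      - (x*y'-y*x')/2 * Real.sin (Real.pi/4) : ℝ) : ℂ) := by
  rw [Mt, Mt, key]
  push_cast [-Complex.ofReal_cos, -Complex.ofReal_sin]
  linear_combination ((-(y*y':ℂ)/2) * (Real.cos (Real.pi/4):ℂ)
    + ((x*y'-y*x':ℂ)/2) * (Real.sin (Real.pi/4):ℂ)) * Complex.I_sq

lemma key2_re (x y z x' y' z' : ℝ) :
    (Matrix.trace (Mt x y z * (R * Mt x' y' z' * Rᴴ))).re =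
    (((1+z)*(1+z') + (1-z)*(1-z'))/4 + (x*x'+y*y')/2 * Real.cos (Real.pi/4)
      - (x*y'-y*x')/2 * Real.sin (Real.pi/4)) := by
  rw [key2, Complex.ofReal_re]

lemma pauli1 : pauli 1 = !![0, 1; 1, 0] := rfl
lemma pauli2 : pauli 2 = !![0, -Complex.I; Complex.I, 0] := rfl
lemma pauli3 : pauli 3 = !![1, 0; 0, -1] := rfl

lemma w1p : (1 / 2 : ℂ) • (1 + (r:ℂ) • pauli 1) = Mt r 0 0 := by
  rw [pauli1]; ext i j; fin_cases i <;> fin_cases j <;>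
    simp [Mt, Matrix.one_apply] <;> norm_num <;> ring
lemma w1m : (1 / 2 : ℂ) • (1 - (r:ℂ) • pauli 1) = Mt (-r) 0 0 := by
  rw [pauli1]; ext i j; fin_cases i <;> fin_cases j <;>
    simp [Mt, Matrix.one_apply] <;> norm_num <;> ring
lemma w2p : (1 / 2 : ℂ) • (1 + (r:ℂ) • pauli 2) = Mt 0 r 0 := by
  rw [pauli2]; ext i j; fin_cases i <;> fin_cases j <;>
    simp [Mt, Matrix.one_apply] <;> norm_num <;> ring
lemma w2m : (1 / 2 : ℂ) • (1 - (r:ℂ) • pauli 2) = Mt 0 (-r) 0 := by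
  rw [pauli2]; ext i j; fin_cases i <;> fin_cases j <;>
    simp [Mt, Matrix.one_apply] <;> norm_num <;> ring
lemma w3p : (1 / 2 : ℂ) • (1 + pauli 3) = Mt 0 0 1 := by
  rw [pauli3]; ext i j; fin_cases i <;> fin_cases j <;>
    simp [Mt, Matrix.one_apply] <;> norm_num <;> ring
lemma w3m : (1 / 2 : ℂ) • (1 - pauli 3) = Mt 0 0 (-1) := by
  rw [pauli3]; ext i j; fin_cases i <;> fin_cases j <;>
    simp [Mt, Matrix.one_apply] <;> norm_num <;> ring

lemma hrr : r * r = Real.sqrt 2 := by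
  rw [r, ← Real.rpow_add (by norm_num : (0:ℝ) < 2), Real.sqrt_eq_rpow]; norm_num

lemma hqc : r * r * Real.cos (Real.pi / 4) = 1 := by
  rw [hrr, Real.cos_pi_div_four,
    show Real.sqrt 2 * (Real.sqrt 2 / 2) = Real.sqrt 2 * Real.sqrt 2 / 2 by ring,
    Real.mul_self_sqrt (by norm_num)]
  norm_num

lemma hqs : r * r * Real.sin (Real.pi / 4) = 1 := by
  rw [hrr, Real.sin_pi_div_four,
    show Real.sqrt 2 * (Real.sqrt 2 / 2) = Real.sqrt 2 * Real.sqrt 2 / 2 by ring,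
    Real.mul_self_sqrt (by norm_num)]
  norm_num

lemma hmain : 1 / 2 * (1 + r ^ 2 * Real.cos (Real.pi / 4)) = 1 := by
  rw [sq]; rw [show r * r * Real.cos (Real.pi/4) = 1 from hqc]; norm_num

set_option maxHeartbeats 2000000 in
lemma val_bounds {ρ : Matrix (Fin 2) (Fin 2) ℂ} (hρ : ρ ∈ Ω)
    {ω : Matrix (Fin 2) (Fin 2) ℂ} (hω : ω ∈ Ω) :
    0 ≤ (Matrix.trace (ρ * (R * ω * Rᴴ))).re ∧ (Matrix.trace (ρ * (R * ω * Rᴴ))).re ≤ 1 := by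
  simp only [Ω, Set.mem_insert_iff, Set.mem_singleton_iff] at hρ hω
  rcases hρ with rfl | rfl | rfl | rfl | rfl | rfl <;>
    rcases hω with rfl | rfl | rfl | rfl | rfl | rfl <;>
      simp only [w1p, w1m, w2p, w2m, w3p, w3m, key2_re] <;>
        constructor <;> nlinarith [hqc, hqs]

lemma val_top :
    (Matrix.trace ((1 / 2 : ℂ) • (1 + (r:ℂ) • pauli 1) *
      (R * ((1 / 2 : ℂ) • (1 + (r:ℂ) • pauli 1)) * Rᴴ))).re =
    1 / 2 * (1 + r ^ 2 * Real.cos (Real.pi / 4)) := by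
  rw [w1p, key2_re, hmain]; nlinarith [hqc]

lemma trace_one {ω : Matrix (Fin 2) (Fin 2) ℂ} (hω : ω ∈ Ω) :
    (Matrix.trace (ω * 1)).re = 1 := by
  simp only [Ω, Set.mem_insert_iff, Set.mem_singleton_iff] at hω
  rcases hω with rfl | rfl | rfl | rfl | rfl | rfl <;>
    simp only [w1p, w1m, w2p, w2m, w3p, w3m, mul_one, Mt, Matrix.trace_fin_two,
      Matrix.cons_val', Matrix.cons_val_zero, Matrix.cons_val_one, Matrix.head_cons,
      Matrix.empty_val', Matrix.cons_val_fin_one, Matrix.head_fin_const, Matrix.of_apply] <;>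
    norm_num [← Complex.ofReal_add]

/-- real-linear pairing with fixed left factor -/
def Lr (A : Matrix (Fin 2) (Fin 2) ℂ) : Matrix (Fin 2) (Fin 2) ℂ →ₗ[ℝ] ℝ where
  toFun e := (Matrix.trace (A * e)).re
  map_add' x y := by simp [Matrix.mul_add]
  map_smul' c x := by
    simp [Matrix.mul_smul, Complex.real_smul]

/-- real-linear pairing with fixed right factor -/
def Ll (E : Matrix (Fin 2) (Fin 2) ℂ) : Matrix (Fin 2) (Fin 2) ℂ →ₗ[ℝ] ℝ where
  toFun ρ := (Matrix.trace (ρ * E)).re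
  map_add' x y := by simp [Matrix.add_mul]
  map_smul' c x := by
    simp [Matrix.smul_mul, Complex.real_smul]

end StmtFiveAux

end StmtFiveAux

open StmtFiveAux in

/-- Pairing a state of unipartite oblate stabilizer theory with an effect
yields a probability, and the maximum over extreme points ρ ∈ Ω, e ∈ {RωR† : ω ∈ Ω}
equals ½(1 + r² cos(π/4)) = 1. -/
theorem stmt_5 :
    (∀ ρ ∈ convexHull ℝ Ω,
      ∀ e ∈ convexHull ℝ
          (({0, 1} : Set (Matrix (Fin 2) (Fin 2) ℂ)) ∪ (fun ω => R * ω * Rᴴ) '' Ω),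
        (Matrix.trace (ρ * e)).re ∈ Set.Icc (0 : ℝ) 1) ∧
    IsGreatest
      {x : ℝ | ∃ ρ ∈ Ω, ∃ ω ∈ Ω, x = (Matrix.trace (ρ * (R * ω * Rᴴ))).re}
      (1 / 2 * (1 + r ^ 2 * Real.cos (Real.pi / 4))) ∧
    1 / 2 * (1 + r ^ 2 * Real.cos (Real.pi / 4)) = 1 := by
  refine ⟨?_, ⟨?_, ?_⟩, hmain⟩
  · intro ρ hρ e he
    revert e he
    have hΩsub : Ω ⊆ {ρ' : Matrix (Fin 2) (Fin 2) ℂ |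
        ∀ e ∈ convexHull ℝ
          (({0, 1} : Set (Matrix (Fin 2) (Fin 2) ℂ)) ∪ (fun ω => R * ω * Rᴴ) '' Ω),
          (Matrix.trace (ρ' * e)).re ∈ Set.Icc (0 : ℝ) 1} := by
      intro ω hω
      intro e he
      have hgen : (({0, 1} : Set (Matrix (Fin 2) (Fin 2) ℂ)) ∪ (fun ω => R * ω * Rᴴ) '' Ω) ⊆
          (Lr ω) ⁻¹' Set.Icc (0:ℝ) 1 := by
        rintro x (hx | ⟨ω', hω', rfl⟩)
        · rcases hx with rfl | rfl
          · simp [Lr, Set.mem_preimage]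
          · simp only [Lr, Set.mem_preimage, LinearMap.coe_mk, AddHom.coe_mk]
            rw [trace_one hω]; simp
        · simpa [Lr, Set.mem_preimage, Set.mem_Icc] using val_bounds hω hω'
      have := convexHull_min hgen ((convex_Icc (0:ℝ) 1).linear_preimage (Lr ω)) he
      simpa [Lr] using this
    have hconv : Convex ℝ {ρ' : Matrix (Fin 2) (Fin 2) ℂ |
        ∀ e ∈ convexHull ℝ
          (({0, 1} : Set (Matrix (Fin 2) (Fin 2) ℂ)) ∪ (fun ω => R * ω * Rᴴ) '' Ω),
          (Matrix.trace (ρ' * e)).re ∈ Set.Icc (0 : ℝ) 1} := by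
      have heq : {ρ' : Matrix (Fin 2) (Fin 2) ℂ |
          ∀ e ∈ convexHull ℝ
            (({0, 1} : Set (Matrix (Fin 2) (Fin 2) ℂ)) ∪ (fun ω => R * ω * Rᴴ) '' Ω),
            (Matrix.trace (ρ' * e)).re ∈ Set.Icc (0 : ℝ) 1} =
          ⋂ e ∈ convexHull ℝ
            (({0, 1} : Set (Matrix (Fin 2) (Fin 2) ℂ)) ∪ (fun ω => R * ω * Rᴴ) '' Ω),
            (Ll e) ⁻¹' Set.Icc (0:ℝ) 1 := by
        ext ρ'; simp [Ll]
      rw [heq]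
      exact convex_iInter₂ fun e _ => (convex_Icc (0:ℝ) 1).linear_preimage (Ll e)
    exact convexHull_min hΩsub hconv hρ
  · exact ⟨(1 / 2 : ℂ) • (1 + (r:ℂ) • pauli 1), by simp only [Ω, Set.mem_insert_iff, true_or],
      (1 / 2 : ℂ) • (1 + (r:ℂ) • pauli 1), by simp only [Ω, Set.mem_insert_iff, true_or], val_top.symm⟩
  · rintro x ⟨ρ, hρ, ω, hω, rfl⟩
    rw [hmain]
    exact (val_bounds hρ hω).2
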